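/- Let $0<h\le\min\{x-u,\,v-x\}$ for real numbers $u<x<v$, and let $w^2$ be differentiable on $[u,v]$ with $(w^2)'=-2Q'w^2$ where $Q'$ is non-negative and non-decreasing and $w^2$ is non-increasing on $[u,v]$. Then $\left|\mathrm{p.v.}\int_{x-h}^{x+h}\frac{w^2(t)}{x-t}\,dt\right|\le 4h\,w^2(x-h)\,Q'(x+h)$. -/

import Mathlib

open MeasureTheory Filter Set

/-- If `0 < h ≤ min (x-u) (v-x)`, `w²` is differentiable on `[u,v]`
with `(w²)' = -2 Q' w²`, `Q'` non-negative and non-decreasing, and `w²`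
non-increasing on `[u,v]`, then
`|p.v. ∫_{x-h}^{x+h} w²(t)/(x-t) dt| ≤ 4 h w²(x-h) Q'(x+h)`. -/
theorem stmt19 (u v x h : ℝ) (huv : u < x) (hxv : x < v)
    (hh : 0 < h) (hhle : h ≤ min (x - u) (v - x))
    (w2 Q' : ℝ → ℝ)
    (hderiv : ∀ t ∈ Set.Icc u v, HasDerivAt w2 (-2 * Q' t * w2 t) t)
    (hQ'nonneg : ∀ t ∈ Set.Icc u v, 0 ≤ Q' t)
    (hQ'mono : ∀ s ∈ Set.Icc u v, ∀ t ∈ Set.Icc u v, s ≤ t → Q' s ≤ Q' t)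
    (hw2anti : ∀ s ∈ Set.Icc u v, ∀ t ∈ Set.Icc u v, s ≤ t → w2 t ≤ w2 s)
    (L : ℝ)
    (hL : Filter.Tendsto
      (fun δ : ℝ => (∫ t in (x - h)..(x - δ), w2 t / (x - t)) +
        ∫ t in (x + δ)..(x + h), w2 t / (x - t))
      (nhdsWithin 0 (Set.Ioi 0)) (nhds L)) :
    |L| ≤ 4 * h * w2 (x - h) * Q' (x + h) := by
  have hxhu : u ≤ x - h := by have := le_trans hhle (min_le_left _ _); linarith
  have hxhv : x + h ≤ v := by have := le_trans hhle (min_le_right _ _); linarith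
  have hmemL : x - h ∈ Set.Icc u v := ⟨hxhu, by linarith⟩
  have hmemR : x + h ∈ Set.Icc u v := ⟨by linarith, hxhv⟩
  -- sign lemma: Q' t * w2 t ≥ 0 on [u,v]
  have hsign : ∀ t ∈ Set.Icc u v, 0 ≤ Q' t * w2 t := by
    intro t ht
    by_contra hneg
    push_neg at hneg
    have hd : 0 < -2 * Q' t * w2 t := by nlinarith
    have hslope := hasDerivAt_iff_tendsto_slope.mp (hderiv t ht)
    rcases lt_or_eq_of_le ht.2 with htv | htv
    · -- t < v : use right slopes
      have hsub : Set.Ioi t ⊆ {t}ᶜ := fun y hy => ne_of_gt hy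
      have ht2 : Tendsto (slope w2 t) (nhdsWithin t (Set.Ioi t)) (nhds (-2 * Q' t * w2 t)) :=
        hslope.mono_left (nhdsWithin_mono t hsub)
      have hev : ∀ᶠ y in nhdsWithin t (Set.Ioi t), slope w2 t y ≤ 0 := by
        filter_upwards [self_mem_nhdsWithin,
          eventually_nhdsWithin_of_eventually_nhds (Filter.Tendsto.eventually_lt_const htv tendsto_id)]
          with y hy1 hy2
        have hyIcc : y ∈ Set.Icc u v := ⟨le_of_lt (lt_of_le_of_lt ht.1 hy1), le_of_lt hy2⟩
        have := hw2anti t ht y hyIcc (le_of_lt hy1)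
        rw [slope_def_field]
        have : w2 y - w2 t ≤ 0 := by linarith
        have hy0 : 0 < y - t := by simp at hy1; linarith
        exact div_nonpos_of_nonpos_of_nonneg this (le_of_lt hy0)
      have : -2 * Q' t * w2 t ≤ 0 := le_of_tendsto ht2 hev
      linarith
    · -- t = v : use left slopes
      have hsub : Set.Iio t ⊆ {t}ᶜ := fun y hy => ne_of_lt hy
      have ht2 : Tendsto (slope w2 t) (nhdsWithin t (Set.Iio t)) (nhds (-2 * Q' t * w2 t)) :=
        hslope.mono_left (nhdsWithin_mono t hsub)
      have htu : u < t := by rw [htv]; linarith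
      have hev : ∀ᶠ y in nhdsWithin t (Set.Iio t), slope w2 t y ≤ 0 := by
        filter_upwards [self_mem_nhdsWithin,
          eventually_nhdsWithin_of_eventually_nhds (Filter.Tendsto.eventually_const_lt htu tendsto_id)]
          with y hy1 hy2
        have hyIcc : y ∈ Set.Icc u v := ⟨le_of_lt hy2, le_of_lt (lt_of_lt_of_le hy1 ht.2)⟩
        have := hw2anti y hyIcc t ht (le_of_lt hy1)
        rw [slope_def_field]
        have hnum : 0 ≤ w2 y - w2 t := by linarith
        have hy0 : y - t < 0 := by simp at hy1; linarith
        exact div_nonpos_of_nonneg_of_nonpos hnum (le_of_lt hy0)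
      have : -2 * Q' t * w2 t ≤ 0 := le_of_tendsto ht2 hev
      linarith
  -- the constant
  set K : ℝ := 2 * (Q' (x + h) * w2 (x - h)) with hK
  have hKnonneg : 0 ≤ K := by
    rcases le_or_gt 0 (w2 (x - h)) with hw | hw
    · have := hQ'nonneg (x + h) hmemR; positivity
    · have h1 := hsign (x + h) hmemR
      have h2 := hw2anti (x - h) hmemL (x + h) hmemR (by linarith)
      nlinarith [hQ'nonneg (x + h) hmemR]
  -- derivative bound on [x-h, x+h]
  have hbound : ∀ t ∈ Set.Icc (x - h) (x + h), ‖-2 * Q' t * w2 t‖ ≤ K := by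
    intro t ht
    have htIcc : t ∈ Set.Icc u v := ⟨le_trans hxhu ht.1, le_trans ht.2 hxhv⟩
    have hs := hsign t htIcc
    have hnorm : ‖-2 * Q' t * w2 t‖ = 2 * (Q' t * w2 t) := by
      rw [Real.norm_eq_abs, abs_of_nonpos (by nlinarith)]; ring
    rw [hnorm, hK]
    have hQle := hQ'mono t htIcc (x + h) hmemR ht.2
    have hwle := hw2anti (x - h) hmemL t htIcc ht.1
    rcases le_or_gt 0 (w2 t) with hw | hw
    · have := hQ'nonneg (x + h) hmemR
      nlinarith
    · have hQt : Q' t = 0 := by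
        have := hQ'nonneg t htIcc
        nlinarith
      rw [hQt]; simp; linarith [hKnonneg]
  -- continuity of w2 on [x-h, x+h]
  have hw2cont : ∀ t ∈ Set.Icc (x - h) (x + h), ContinuousAt w2 t := by
    intro t ht
    exact (hderiv t ⟨le_trans hxhu ht.1, le_trans ht.2 hxhv⟩).continuousAt
  -- MVT bound
  have hMVT : ∀ s ∈ Set.Ioc (0 : ℝ) h, |w2 (x - s) - w2 (x + s)| ≤ K * (2 * s) := by
    intro s hs
    have hsub : Set.Icc (x - h) (x + h) ⊆ Set.Icc u v :=
      Set.Icc_subset_Icc hxhu hxhv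
    have hmvt := Convex.norm_image_sub_le_of_norm_hasDerivWithin_le
      (f := w2) (f' := fun t => -2 * Q' t * w2 t) (s := Set.Icc (x - h) (x + h))
      (fun t ht => (hderiv t (hsub ht)).hasDerivWithinAt) hbound
      (convex_Icc _ _) (x := x + s) (y := x - s)
      ⟨by linarith [hs.1], by linarith [hs.2]⟩ ⟨by linarith [hs.2], by linarith [hs.1]⟩
    have : ‖x - s - (x + s)‖ = 2 * s := by
      rw [Real.norm_eq_abs, abs_of_nonpos (by linarith [hs.1])]; ring
    rw [this] at hmvt
    exact hmvt
  -- rewrite F δ for δ ∈ Ioo 0 h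
  have hFbound : ∀ δ ∈ Set.Ioo (0 : ℝ) h,
      |(∫ t in (x - h)..(x - δ), w2 t / (x - t)) +
        ∫ t in (x + δ)..(x + h), w2 t / (x - t)| ≤ 2 * K * h := by
    intro δ hδ
    have hA : (∫ t in (x - h)..(x - δ), w2 t / (x - t)) =
        ∫ s in δ..h, w2 (x - s) / s := by
      rw [← intervalIntegral.integral_comp_sub_left (fun t => w2 t / (x - t)) x]
      simp
    have hB : (∫ t in (x + δ)..(x + h), w2 t / (x - t)) =
        ∫ s in δ..h, w2 (x + s) / (-s) := by
      rw [← intervalIntegral.integral_comp_add_left (fun t => w2 t / (x - t)) x]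
      simp
    -- integrability
    have huIcc : Set.uIcc δ h = Set.Icc δ h := Set.uIcc_of_le (le_of_lt hδ.2)
    have hc1 : ContinuousOn (fun s => w2 (x - s) / s) (Set.uIcc δ h) := by
      rw [huIcc]
      apply ContinuousOn.div
      · intro s hs
        exact ((hw2cont (x - s) ⟨by linarith [hs.2], by linarith [hδ.1, hs.1]⟩).comp
          ((continuous_const.sub continuous_id).continuousAt)).continuousWithinAt
      · exact continuousOn_id
      · intro s hs; exact ne_of_gt (lt_of_lt_of_le hδ.1 hs.1)
    have hc2 : ContinuousOn (fun s => w2 (x + s) / (-s)) (Set.uIcc δ h) := by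
      rw [huIcc]
      apply ContinuousOn.div
      · intro s hs
        exact ((hw2cont (x + s) ⟨by linarith [hδ.1, hs.1], by linarith [hs.2]⟩).comp
          ((continuous_const.add continuous_id).continuousAt)).continuousWithinAt
      · exact (continuous_neg.comp continuous_id).continuousOn
      · intro s hs
        simp only [neg_ne_zero]
        exact ne_of_gt (lt_of_lt_of_le hδ.1 hs.1)
    have hsum : (∫ s in δ..h, w2 (x - s) / s) + (∫ s in δ..h, w2 (x + s) / (-s)) =
        ∫ s in δ..h, (w2 (x - s) - w2 (x + s)) / s := by
      rw [← intervalIntegral.integral_add (hc1.intervalIntegrable) (hc2.intervalIntegrable)]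
      congr 1
      ext s
      rw [div_neg, sub_div]
      ring
    rw [hA, hB, hsum]
    have hle : |∫ s in δ..h, (w2 (x - s) - w2 (x + s)) / s| ≤ 2 * K * |h - δ| := by
      rw [← Real.norm_eq_abs]
      apply intervalIntegral.norm_integral_le_of_norm_le_const
      intro s hs
      rw [Set.uIoc_of_le (le_of_lt hδ.2)] at hs
      have hs0 : 0 < s := lt_trans hδ.1 hs.1
      have hsIoc : s ∈ Set.Ioc (0 : ℝ) h := ⟨hs0, hs.2⟩
      have := hMVT s hsIoc
      rw [Real.norm_eq_abs, abs_div, abs_of_pos hs0]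
      rw [div_le_iff₀ hs0]
      calc |w2 (x - s) - w2 (x + s)| ≤ K * (2 * s) := this
        _ = 2 * K * s := by ring
    calc |∫ s in δ..h, (w2 (x - s) - w2 (x + s)) / s| ≤ 2 * K * |h - δ| := hle
      _ ≤ 2 * K * h := by
          apply mul_le_mul_of_nonneg_left _ (by linarith)
          rw [abs_of_nonneg (by linarith [hδ.2])]
          linarith [hδ.1]
  -- pass to the limit
  have hev : ∀ᶠ δ in nhdsWithin (0 : ℝ) (Set.Ioi 0),
      |(∫ t in (x - h)..(x - δ), w2 t / (x - t)) +
        ∫ t in (x + δ)..(x + h), w2 t / (x - t)| ≤ 2 * K * h := by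
    filter_upwards [Ioo_mem_nhdsGT hh] with δ hδ
    exact hFbound δ hδ
  have hLle : |L| ≤ 2 * K * h := le_of_tendsto hL.abs hev
  calc |L| ≤ 2 * K * h := hLle
    _ = 4 * h * w2 (x - h) * Q' (x + h) := by rw [hK]; ring
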